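/- arXiv:1201.4154 — 2 statements merged into one kernel-verified Lean document; each statement's English description precedes it below -/
import Mathlib

section
/- Let x ∈ U(p), y ∈ U(q) (p×p and q×q complex unitary matrices), and let ψ be a q×p matrix of odd elements of a complexified real Grassmann algebra (so ψ† = conjugate-transpose, entries anticommute). Set A = √(I_p − iψ†ψ), B = √(I_q − iψψ†) via terminating Taylor series. Then the block matrix X with X_{I,I} = xA, X_{I,II} = i x ψ† y, X_{II,I} = ψ, X_{II,II} = By satisfies: (xA)†(xA) + iψ†ψ = I_p; −(xA)†(ixψ†y) + iψ†(By) = 0; and −(ixψ†y)†(ixψ†y) + i(By)†(By) = i I_q. -/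
noncomputable section

open Matrix

/-- The binomial coefficient `binom(1/2, k)`, the `k`-th Taylor coefficient of
`√(1+x)`, as a complex number. -/
def sqrtCoeffC (k : ℕ) : ℂ :=
  (∏ i ∈ Finset.range k, ((1 : ℂ) / 2 - (i : ℂ))) / (Nat.factorial k)

/-- The conjugate transpose `M† = (M̄)ᵀ` of a matrix over `Λ`, with respect to
a conjugation `c` of `Λ` (an entrywise ring homomorphism, as appropriate for a
complexified real Grassmann algebra). -/
def dagger {Λ : Type*} [Ring Λ] {a b : Type*} (c : Λ →+* Λ)
    (M : Matrix a b Λ) : Matrix b a Λ :=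
  (M.map c)ᵀ

open Polynomial

set_option linter.unusedSectionVars false

lemma sqrtCoeffC_zero : sqrtCoeffC 0 = 1 := by simp [sqrtCoeffC]

lemma sqrtCoeffC_one : sqrtCoeffC 1 = 1/2 := by
  simp [sqrtCoeffC, Nat.factorial]

lemma sqrtCoeffC_rec (k : ℕ) :
    ((k : ℂ) + 1) * sqrtCoeffC (k + 1) = ((1 : ℂ)/2 - k) * sqrtCoeffC k := by
  have hf : (Nat.factorial (k+1) : ℂ) = ((k:ℂ)+1) * (Nat.factorial k : ℂ) := by
    push_cast [Nat.factorial_succ]; ring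
  have hk1 : ((k:ℂ)+1) ≠ 0 := by
    intro h
    have := congrArg Complex.re h
    simp at this
    nlinarith [this]
  have hfk : (Nat.factorial k : ℂ) ≠ 0 := by
    exact_mod_cast Nat.cast_ne_zero.mpr (Nat.factorial_ne_zero k)
  rw [sqrtCoeffC, sqrtCoeffC, Finset.prod_range_succ, hf]
  field_simp

lemma conj_sqrtCoeffC (k : ℕ) : (starRingEnd ℂ) (sqrtCoeffC k) = sqrtCoeffC k := by
  rw [sqrtCoeffC, map_div₀, map_prod]
  congr 1
  · exact Finset.prod_congr rfl fun i _ => by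
      simp [Complex.conj_ofNat]
  · rw [map_natCast]

def sqS (m : ℕ) : ℂ := ∑ k ∈ Finset.range (m+1), sqrtCoeffC k * sqrtCoeffC (m - k)

lemma sqS_symm_aux (m : ℕ) (f : ℕ → ℕ → ℂ) :
    ∑ k ∈ Finset.range (m+1), f k (m-k) = ∑ k ∈ Finset.range (m+1), f (m-k) k := by
  rw [← Finset.sum_range_reflect (fun k => f (m-k) k) (m+1)]
  apply Finset.sum_congr rfl
  intro k hk
  simp only [Finset.mem_range] at hk
  have h1 : m + 1 - 1 - k = m - k := by omega
  have h2 : m - (m - k) = k := by omega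
  simp only [h1, h2]

lemma sqS_rec (m : ℕ) : ((m:ℂ) + 1) * sqS (m+1) = (1 - (m:ℂ)) * sqS m := by
  -- (m+1) S_{m+1} = Σ (k + (m+1-k)) c_k c_{m+1-k} = 2 Σ k c_k c_{m+1-k}
  have h1 : ((m:ℂ)+1) * sqS (m+1)
      = 2 * ∑ k ∈ Finset.range (m+2), (k:ℂ) * (sqrtCoeffC k * sqrtCoeffC (m+1-k)) := by
    rw [sqS, Finset.mul_sum]
    have e1 : ∀ k ∈ Finset.range (m+2),
        ((m:ℂ)+1) * (sqrtCoeffC k * sqrtCoeffC (m+1-k))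
        = (k:ℂ) * (sqrtCoeffC k * sqrtCoeffC (m+1-k))
          + ((m+1-k : ℕ):ℂ) * (sqrtCoeffC k * sqrtCoeffC (m+1-k)) := by
      intro k hk
      simp only [Finset.mem_range] at hk
      have : ((m+1-k : ℕ):ℂ) = (m:ℂ) + 1 - (k:ℂ) := by
        push_cast [Nat.cast_sub (by omega : k ≤ m+1)]; ring
      rw [this]; ring
    rw [Finset.sum_congr rfl e1, Finset.sum_add_distrib]
    have e2 : ∑ k ∈ Finset.range (m+2), ((m+1-k : ℕ):ℂ) * (sqrtCoeffC k * sqrtCoeffC (m+1-k))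
        = ∑ k ∈ Finset.range (m+2), (k:ℂ) * (sqrtCoeffC k * sqrtCoeffC (m+1-k)) := by
      have := sqS_symm_aux (m+1) (fun a b => (b:ℂ) * (sqrtCoeffC a * sqrtCoeffC b))
      rw [this]
      apply Finset.sum_congr rfl
      intro k hk
      ring
    rw [e2]; ring
  -- shift: Σ_{k∈range(m+2)} k c_k c_{m+1-k} = Σ_{j∈range(m+1)} (j+1) c_{j+1} c_{m-j}
  have h2 : ∑ k ∈ Finset.range (m+2), (k:ℂ) * (sqrtCoeffC k * sqrtCoeffC (m+1-k))
      = ∑ j ∈ Finset.range (m+1), ((1:ℂ)/2 - j) * (sqrtCoeffC j * sqrtCoeffC (m-j)) := by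
    rw [Finset.sum_range_succ']
    simp only [Nat.cast_zero, zero_mul, add_zero]
    apply Finset.sum_congr rfl
    intro j hj
    simp only [Finset.mem_range] at hj
    have : m + 1 - (j+1) = m - j := by omega
    rw [this]
    push_cast
    have := sqrtCoeffC_rec j
    calc ((j:ℂ)+1) * (sqrtCoeffC (j+1) * sqrtCoeffC (m-j))
        = (((j:ℂ)+1) * sqrtCoeffC (j+1)) * sqrtCoeffC (m-j) := by ring
      _ = (((1:ℂ)/2 - j) * sqrtCoeffC j) * sqrtCoeffC (m-j) := by rw [this]
      _ = ((1:ℂ)/2 - j) * (sqrtCoeffC j * sqrtCoeffC (m-j)) := by ring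
  -- Σ j c_j c_{m-j} = (m/2) S m  (by symmetry)
  have h3 : 2 * ∑ j ∈ Finset.range (m+1), (j:ℂ) * (sqrtCoeffC j * sqrtCoeffC (m-j))
      = (m:ℂ) * sqS m := by
    have e2 : ∑ j ∈ Finset.range (m+1), ((m-j : ℕ):ℂ) * (sqrtCoeffC j * sqrtCoeffC (m-j))
        = ∑ j ∈ Finset.range (m+1), (j:ℂ) * (sqrtCoeffC j * sqrtCoeffC (m-j)) := by
      have := sqS_symm_aux m (fun a b => (b:ℂ) * (sqrtCoeffC a * sqrtCoeffC b))
      rw [this]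
      exact Finset.sum_congr rfl fun j hj => by ring
    calc 2 * ∑ j ∈ Finset.range (m+1), (j:ℂ) * (sqrtCoeffC j * sqrtCoeffC (m-j))
        = ∑ j ∈ Finset.range (m+1), ((j:ℂ) * (sqrtCoeffC j * sqrtCoeffC (m-j))
            + ((m-j:ℕ):ℂ) * (sqrtCoeffC j * sqrtCoeffC (m-j))) := by
          rw [Finset.sum_add_distrib, e2]; ring
      _ = ∑ j ∈ Finset.range (m+1), (m:ℂ) * (sqrtCoeffC j * sqrtCoeffC (m-j)) := by
          apply Finset.sum_congr rfl
          intro j hj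
          simp only [Finset.mem_range] at hj
          have : ((m-j : ℕ):ℂ) = (m:ℂ) - (j:ℂ) := by
            push_cast [Nat.cast_sub (by omega : j ≤ m)]; ring
          rw [this]; ring
      _ = (m:ℂ) * sqS m := by rw [sqS, Finset.mul_sum]
  have expand : ∑ j ∈ Finset.range (m+1), ((1:ℂ)/2 - j) * (sqrtCoeffC j * sqrtCoeffC (m-j))
      = (1/2) * sqS m - ∑ j ∈ Finset.range (m+1), (j:ℂ) * (sqrtCoeffC j * sqrtCoeffC (m-j)) := by
    rw [sqS, Finset.mul_sum, ← Finset.sum_sub_distrib]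
    apply Finset.sum_congr rfl; intro j _; ring
  rw [h1, h2, expand]
  have h3' : ∑ j ∈ Finset.range (m+1), (j:ℂ) * (sqrtCoeffC j * sqrtCoeffC (m-j))
      = (m:ℂ) * sqS m / 2 := by linear_combination h3 / 2
  rw [h3']
  ring

lemma sqS_zero : sqS 0 = 1 := by simp [sqS, sqrtCoeffC_zero]
lemma sqS_one : sqS 1 = 1 := by
  simp [sqS, Finset.sum_range_succ, sqrtCoeffC_zero, sqrtCoeffC_one]
  norm_num

lemma sqS_eq_zero (m : ℕ) (hm : 2 ≤ m) : sqS m = 0 := by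
  induction m with
  | zero => omega
  | succ n ih =>
    rcases Nat.lt_or_ge n 2 with h | h
    · interval_cases n
      · omega
      · have := sqS_rec 1
        rw [sqS_one] at this
        have h2 : ((1:ℕ):ℂ) + 1 ≠ 0 := by norm_num
        field_simp at this
        simpa using this
    · have := sqS_rec n
      rw [ih (by omega)] at this
      have h2 : ((n:ℕ):ℂ) + 1 ≠ 0 := by
        intro h'
        have := congrArg Complex.re h'
        simp at this
        nlinarith [this]
      rw [mul_zero] at this
      exact (mul_eq_zero.mp this).resolve_left h2

def sqrtPoly (K : ℕ) : Polynomial ℂ :=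
  ∑ k ∈ Finset.range (K+1), Polynomial.C (sqrtCoeffC k) * Polynomial.X ^ k

lemma sqrtPoly_coeff (K n : ℕ) :
    (sqrtPoly K).coeff n = if n ≤ K then sqrtCoeffC n else 0 := by
  rw [sqrtPoly, Polynomial.finset_sum_coeff]
  simp only [Polynomial.coeff_C_mul, Polynomial.coeff_X_pow]
  rw [Finset.sum_congr rfl (fun k _ => by rw [mul_ite, mul_one, mul_zero])]
  rw [Finset.sum_ite_eq (Finset.range (K+1)) n sqrtCoeffC]
  simp [Finset.mem_range, Nat.lt_succ_iff]

lemma sqrtPoly_sq (K : ℕ) :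
    Polynomial.X ^ (K+1) ∣ (sqrtPoly K)^2 - (1 + Polynomial.X) := by
  rw [Polynomial.X_pow_dvd_iff]
  intro d hd
  have hdK : d ≤ K := by omega
  rw [Polynomial.coeff_sub, sq, Polynomial.coeff_mul]
  have hcoef : ∑ x ∈ Finset.HasAntidiagonal.antidiagonal d,
      (sqrtPoly K).coeff x.1 * (sqrtPoly K).coeff x.2 = sqS d := by
    rw [Finset.Nat.sum_antidiagonal_eq_sum_range_succ_mk]
    rw [sqS]
    apply Finset.sum_congr rfl
    intro k hk
    simp only [Finset.mem_range] at hk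
    rw [sqrtPoly_coeff, sqrtPoly_coeff, if_pos (by omega), if_pos (by omega)]
  rw [hcoef]
  rcases Nat.lt_or_ge d 2 with h | h
  · interval_cases d
    · simp [sqS_zero, Polynomial.coeff_one, Polynomial.coeff_add]
    · simp [sqS_one, Polynomial.coeff_one, Polynomial.coeff_add, Polynomial.coeff_X_one]
  · rw [sqS_eq_zero d h]
    simp only [Polynomial.coeff_add, Polynomial.coeff_one, Polynomial.coeff_X]
    rw [if_neg (by omega), if_neg (by omega)]
    ring

section Grassmann
variable {Λ : Type*} [Ring Λ] [Algebra ℂ Λ]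

/-- An element with `x + x = 0` in a `ℂ`-module is zero. -/
lemma half_cancel {x : Λ} (h : x + x = 0) : x = 0 := by
  have h2 : (2 : ℂ) • x = 0 := by rw [two_smul]; exact h
  calc x = ((1:ℂ)/2 * 2) • x := by norm_num
    _ = ((1:ℂ)/2) • ((2:ℂ) • x) := by rw [mul_smul]
    _ = 0 := by rw [h2, smul_zero]

variable {ι : Type*} (g : ι → Λ)

/-- Elements of the span of pairwise-anticommuting generators anticommute. -/
lemma span_anticomm' (hg : ∀ i j, g i * g j = -(g j * g i))
    {u v : Λ} (hu : u ∈ Submodule.span ℂ (Set.range g))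
    (hv : v ∈ Submodule.span ℂ (Set.range g)) : u * v = -(v * u) := by
  induction hu using Submodule.span_induction with
  | mem a ha =>
    obtain ⟨i, rfl⟩ := ha
    induction hv using Submodule.span_induction with
    | mem b hb => obtain ⟨j, rfl⟩ := hb; exact hg i j
    | zero => simp
    | add b b' _ _ h1 h2 => rw [mul_add, h1, h2, add_mul]; abel
    | smul r b _ h1 => rw [mul_smul_comm, h1, smul_mul_assoc]; rw [smul_neg]
  | zero => simp
  | add a a' _ _ h1 h2 => rw [add_mul, h1, h2, mul_add]; abel
  | smul r a _ h1 => rw [smul_mul_assoc, h1, mul_smul_comm]; rw [smul_neg]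

lemma span_sq_zero (hg : ∀ i j, g i * g j = -(g j * g i))
    {u : Λ} (hu : u ∈ Submodule.span ℂ (Set.range g)) : u * u = 0 := by
  have h := span_anticomm' g hg hu hu
  apply half_cancel
  nth_rewrite 1 [h]
  exact neg_add_cancel _

/-- Products of pairs of odd elements commute. -/
lemma even_comm' (hg : ∀ i j, g i * g j = -(g j * g i))
    {u v w t : Λ} (hu : u ∈ Submodule.span ℂ (Set.range g))
    (hv : v ∈ Submodule.span ℂ (Set.range g))
    (hw : w ∈ Submodule.span ℂ (Set.range g))
    (ht : t ∈ Submodule.span ℂ (Set.range g)) :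
    Commute (u * v) (w * t) := by
  have hvw := span_anticomm' g hg hv hw
  have huw := span_anticomm' g hg hu hw
  have hvt := span_anticomm' g hg hv ht
  have hut := span_anticomm' g hg hu ht
  show u * v * (w * t) = w * t * (u * v)
  calc u * v * (w * t) = u * (v * w) * t := by noncomm_ring
    _ = -(u * w * (v * t)) := by rw [hvw]; noncomm_ring
    _ = w * (u * (v * t)) := by rw [huw]; noncomm_ring
    _ = -(w * (u * t) * v) := by rw [hvt]; noncomm_ring
    _ = w * t * (u * v) := by rw [hut]; noncomm_ring

/-- A generator sandwiching a product of generators annihilates. -/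
lemma sandwich_zero (hg : ∀ i j, g i * g j = -(g j * g i)) (a : ι) :
    ∀ s : List ι, g a * ((s.map g).prod * g a) = 0 := by
  intro s
  induction s with
  | nil =>
    simp only [List.map_nil, List.prod_nil, one_mul]
    have h := hg a a
    apply half_cancel
    nth_rewrite 1 [h]
    exact neg_add_cancel _
  | cons b s ih =>
    calc g a * (((b :: s).map g).prod * g a)
        = (g a * g b) * ((s.map g).prod * g a) := by
          simp only [List.map_cons, List.prod_cons]; noncomm_ring
      _ = -(g b * (g a * ((s.map g).prod * g a))) := by rw [hg a b]; noncomm_ring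
      _ = 0 := by rw [ih]; simp

/-- A product of generators with a repeated index vanishes. -/
lemma prod_dup_zero (hg : ∀ i j, g i * g j = -(g j * g i)) :
    ∀ l : List ι, ¬ l.Nodup → (l.map g).prod = 0 := by
  intro l
  induction l with
  | nil => intro h; exact absurd List.nodup_nil h
  | cons a t ih =>
    intro h
    rw [List.nodup_cons] at h
    push_neg at h
    by_cases hat : a ∈ t
    · obtain ⟨s, t', rfl⟩ := List.append_of_mem hat
      calc ((a :: (s ++ a :: t')).map g).prod
          = (g a * ((s.map g).prod * g a)) * ((t'.map g).prod) := by
            simp [List.prod_cons, List.prod_append, mul_assoc]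
        _ = 0 := by rw [sandwich_zero g hg]; simp
    · have : ¬ t.Nodup := h hat
      rw [List.map_cons, List.prod_cons, ih this, mul_zero]

variable [Fintype ι]

/-- The span of products of `k` generators. -/
def Tpow (k : ℕ) : Submodule ℂ Λ :=
  Submodule.span ℂ {x | ∃ l : List ι, l.length = k ∧ (l.map g).prod = x}

lemma span_le_Tpow_one' : Submodule.span ℂ (Set.range g) ≤ Tpow g 1 := by
  rw [Submodule.span_le]
  rintro _ ⟨i, rfl⟩
  exact Submodule.subset_span ⟨[i], rfl, by simp⟩

lemma one_mem_Tpow_zero : (1 : Λ) ∈ Tpow g 0 :=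
  Submodule.subset_span ⟨[], rfl, by simp⟩

lemma Tpow_mul'' {k m : ℕ} {a b : Λ} (ha : a ∈ Tpow g k) (hb : b ∈ Tpow g m) :
    a * b ∈ Tpow g (k + m) := by
  induction ha using Submodule.span_induction with
  | mem x hx =>
    obtain ⟨l1, hl1, rfl⟩ := hx
    induction hb using Submodule.span_induction with
    | mem y hy =>
      obtain ⟨l2, hl2, rfl⟩ := hy
      exact Submodule.subset_span ⟨l1 ++ l2, by simp [hl1, hl2], by simp [List.prod_append]⟩
    | zero => rw [mul_zero]; exact Submodule.zero_mem _
    | add y y' _ _ h1 h2 => rw [mul_add]; exact Submodule.add_mem _ h1 h2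
    | smul r y _ h1 => rw [mul_smul_comm]; exact Submodule.smul_mem _ _ h1
  | zero => rw [zero_mul]; exact Submodule.zero_mem _
  | add x x' _ _ h1 h2 => rw [add_mul]; exact Submodule.add_mem _ h1 h2
  | smul r x _ h1 => rw [smul_mul_assoc]; exact Submodule.smul_mem _ _ h1

lemma Tpow_mul' {k m n : ℕ} {a b : Λ} (ha : a ∈ Tpow g k) (hb : b ∈ Tpow g m)
    (hn : k + m = n) : a * b ∈ Tpow g n := hn ▸ Tpow_mul'' g ha hb

lemma Tpow_eq_zero' (hg : ∀ i j, g i * g j = -(g j * g i)) {k : ℕ}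
    (hk : Fintype.card ι < k) {a : Λ} (ha : a ∈ Tpow g k) : a = 0 := by
  have : Tpow g k ≤ ⊥ := by
    rw [Tpow, Submodule.span_le]
    rintro _ ⟨l, hl, rfl⟩
    have : ¬ l.Nodup := by
      intro hn
      have := List.Nodup.length_le_card hn
      omega
    simp [prod_dup_zero g hg l this]
  simpa using this ha

end Grassmann

section Dagger
variable {Λ : Type*} [Ring Λ] [Algebra ℂ Λ] (c : Λ →+* Λ)

lemma dagger_apply' {a b : Type*} (M : Matrix a b Λ) (i : b) (j : a) :
    dagger c M i j = c (M j i) := rfl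

lemma c_smul' (hc_alg : ∀ z : ℂ, c (algebraMap ℂ Λ z) = algebraMap ℂ Λ (starRingEnd ℂ z))
    (z : ℂ) (a : Λ) : c (z • a) = (starRingEnd ℂ z) • c a := by
  rw [Algebra.smul_def, _root_.map_mul, hc_alg, ← Algebra.smul_def]

lemma dagger_dagger' {a b : Type*} (hc_inv : ∀ a : Λ, c (c a) = a) (M : Matrix a b Λ) :
    dagger c (dagger c M) = M := by
  ext i j; simp [dagger_apply', hc_inv]

lemma dagger_smul' {a b : Type*}
    (hc_alg : ∀ z : ℂ, c (algebraMap ℂ Λ z) = algebraMap ℂ Λ (starRingEnd ℂ z))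
    (z : ℂ) (M : Matrix a b Λ) :
    dagger c (z • M) = (starRingEnd ℂ z) • dagger c M := by
  ext i j
  simp [dagger_apply', c_smul' c hc_alg]

lemma dagger_neg' {a b : Type*} (M : Matrix a b Λ) : dagger c (-M) = -(dagger c M) := by
  ext i j; simp [dagger_apply']

lemma dagger_sum' {a b : Type*} {κ : Type*} (s : Finset κ) (f : κ → Matrix a b Λ) :
    dagger c (∑ k ∈ s, f k) = ∑ k ∈ s, dagger c (f k) := by
  ext i j
  simp [dagger_apply', Matrix.sum_apply]

lemma dagger_one' {n : Type*} [DecidableEq n] : dagger c (1 : Matrix n n Λ) = 1 := by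
  ext i j
  by_cases h : i = j <;> simp [dagger_apply', Matrix.one_apply, h]
  · exact fun h' => absurd h'.symm h

lemma dagger_mul' {a b d : Type*} [Fintype b] (M : Matrix a b Λ) (P : Matrix b d Λ)
    (h : ∀ i j k l, Commute (c (M i j)) (c (P k l))) :
    dagger c (M * P) = dagger c P * dagger c M := by
  ext i j
  simp only [dagger_apply', Matrix.mul_apply, map_sum, _root_.map_mul]
  exact Finset.sum_congr rfl fun k _ => (h j k k i).eq

lemma dagger_map_alg' {a b : Type*}
    (hc_alg : ∀ z : ℂ, c (algebraMap ℂ Λ z) = algebraMap ℂ Λ (starRingEnd ℂ z))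
    (x : Matrix a b ℂ) :
    dagger c (x.map (algebraMap ℂ Λ)) = xᴴ.map (algebraMap ℂ Λ) := by
  ext i j
  simp [dagger_apply', Matrix.map_apply, hc_alg, Matrix.conjTranspose_apply]

/-- entries of the image of `algebraMap` commute with everything after `c`. -/
lemma commute_c_alg' {a b : Type*}
    (hc_alg : ∀ z : ℂ, c (algebraMap ℂ Λ z) = algebraMap ℂ Λ (starRingEnd ℂ z))
    (x : Matrix a b ℂ) (i : a) (j : b) (w : Λ) :
    Commute w (c ((x.map (algebraMap ℂ Λ)) i j)) := by
  rw [Matrix.map_apply, hc_alg]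
  exact (Algebra.commutes _ _).symm

lemma commute_pow_entry' {n : ℕ} (D : Matrix (Fin n) (Fin n) Λ)
    (hcomm : ∀ a b a' b', Commute (D a b) (D a' b')) (k : ℕ) :
    ∀ a b a' b', Commute ((D^k) a b) (D a' b') := by
  induction k with
  | zero =>
    intro a b a' b'
    by_cases h : a = b <;> simp [pow_zero, Matrix.one_apply, h]
  | succ k ih =>
    intro a b a' b'
    rw [pow_succ, Matrix.mul_apply]
    exact Commute.sum_left _ _ _ fun j _ => ((ih a j a' b').mul_left (hcomm j b a' b'))
    
lemma dagger_pow' {n : ℕ} (hc_inv : ∀ a : Λ, c (c a) = a)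
    (D : Matrix (Fin n) (Fin n) Λ) (hD : dagger c D = D)
    (hcomm : ∀ a b a' b', Commute (D a b) (D a' b')) (k : ℕ) :
    dagger c (D^k) = D^k := by
  induction k with
  | zero => rw [pow_zero, dagger_one']
  | succ k ih =>
    have hcD : ∀ a b, c (D a b) = D b a := by
      intro a b
      have := congrFun (congrFun hD b) a
      rw [dagger_apply'] at this
      exact this
    have hcDk : ∀ a b, c ((D^k) a b) = (D^k) b a := by
      intro a b
      have := congrFun (congrFun ih b) a
      rw [dagger_apply'] at this
      exact this
    have hcommc : ∀ i j k' l, Commute (c ((D^k) i j)) (c (D k' l)) := by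
      intro i j k' l
      rw [hcDk, hcD]
      exact commute_pow_entry' D hcomm k j i l k'
    have hmain : dagger c (D ^ k * D) = D ^ k * D := by
      rw [dagger_mul' c _ _ hcommc, ih, hD, ← pow_succ', ← pow_succ]
    rw [pow_succ]
    exact hmain

end Dagger

section Assemble
variable {Λ : Type*} [Ring Λ] [Algebra ℂ Λ] {ι : Type*} [Fintype ι] (g : ι → Λ)

lemma entry_pow_mem {n : ℕ} (D : Matrix (Fin n) (Fin n) Λ)
    (h : ∀ i j, D i j ∈ Tpow g 2) (m : ℕ) : ∀ i j, (D^m) i j ∈ Tpow g (2*m) := by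
  induction m with
  | zero =>
    intro i j
    rw [pow_zero]
    by_cases hij : i = j
    · rw [hij, Matrix.one_apply_eq]
      exact Submodule.subset_span ⟨[], rfl, by simp⟩
    · rw [Matrix.one_apply_ne hij]
      exact Submodule.zero_mem _
  | succ m ih =>
    intro i j
    rw [pow_succ, Matrix.mul_apply]
    have : 2 * (m+1) = 2*m + 2 := by ring
    rw [this]
    exact Submodule.sum_mem _ fun k _ => Tpow_mul' g (ih i k) (h k j) (by ring)

lemma pow_eq_zero_of_entries (hg : ∀ i j, g i * g j = -(g j * g i)) {n K : ℕ}
    (hcard : Fintype.card ι < 2*(K+1)) (D : Matrix (Fin n) (Fin n) Λ)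
    (h : ∀ i j, D i j ∈ Tpow g 2) : D^(K+1) = 0 := by
  ext i j
  rw [Matrix.zero_apply]
  exact Tpow_eq_zero' g hg hcard (entry_pow_mem g D h (K+1) i j)

end Assemble

section SqrtM
variable {Λ : Type*} [Ring Λ] [Algebra ℂ Λ]

lemma aeval_sqrtPoly {n K : ℕ} (D : Matrix (Fin n) (Fin n) Λ) :
    (Polynomial.aeval D) (sqrtPoly K) = ∑ k ∈ Finset.range (K+1), sqrtCoeffC k • D^k := by
  rw [sqrtPoly, map_sum]
  apply Finset.sum_congr rfl
  intro k _
  rw [_root_.map_mul, map_pow, Polynomial.aeval_C, Polynomial.aeval_X, ← Algebra.smul_def]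

lemma sqrt_mul_self {n K : ℕ} (D : Matrix (Fin n) (Fin n) Λ) (hD0 : D^(K+1) = 0) :
    (∑ k ∈ Finset.range (K+1), sqrtCoeffC k • D^k)
      * (∑ k ∈ Finset.range (K+1), sqrtCoeffC k • D^k) = 1 + D := by
  obtain ⟨Q, hQ⟩ := sqrtPoly_sq K
  have hP2 : (sqrtPoly K)^2 = (1 + Polynomial.X) + Polynomial.X^(K+1) * Q := by
    rw [← hQ]; ring
  have := congrArg (Polynomial.aeval D) hP2
  rw [map_pow, aeval_sqrtPoly] at this
  rw [map_add, map_add, _root_.map_mul, map_pow, Polynomial.aeval_X, _root_.map_one, hD0,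
    zero_mul, add_zero] at this
  rw [← sq, this]

end SqrtM

set_option maxHeartbeats 1600000 in
/-- with `x ∈ U(p)`, `y ∈ U(q)`, `ψ = ψ¹ + iψ²` a `q × p` matrix
of odd elements of a complexified real Grassmann algebra, and
`A = √(I_p − iψ†ψ)`, `B = √(I_q − iψψ†)` given by terminating Taylor series,
the block matrix with blocks `xA, ixψ†y, ψ, By` satisfies the three defining
relations of `U(p|q)`. -/
theorem u_pq_embedding_relations (p q : ℕ) (Λ : Type*) [Ring Λ] [Algebra ℂ Λ]
    (c : Λ →+* Λ)
    (hc_inv : ∀ a : Λ, c (c a) = a)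
    (hc_alg : ∀ z : ℂ, c (algebraMap ℂ Λ z) = algebraMap ℂ Λ (starRingEnd ℂ z))
    (ψ1 ψ2 : Matrix (Fin q) (Fin p) Λ)
    (hreal1 : ∀ a b, c (ψ1 a b) = ψ1 a b)
    (hreal2 : ∀ a b, c (ψ2 a b) = ψ2 a b)
    (hodd : ∀ u v : Λ,
      u ∈ Set.range (fun ab : Fin q × Fin p => ψ1 ab.1 ab.2) ∪
          Set.range (fun ab : Fin q × Fin p => ψ2 ab.1 ab.2) →
      v ∈ Set.range (fun ab : Fin q × Fin p => ψ1 ab.1 ab.2) ∪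
          Set.range (fun ab : Fin q × Fin p => ψ2 ab.1 ab.2) →
      u * v = -(v * u))
    (x : Matrix (Fin p) (Fin p) ℂ) (hx : xᴴ * x = 1)
    (y : Matrix (Fin q) (Fin q) ℂ) (hy : yᴴ * y = 1) :
    ∀ (ψ : Matrix (Fin q) (Fin p) Λ), ψ = ψ1 + Complex.I • ψ2 →
    ∀ A, A = ∑ k ∈ Finset.range (p * q + 1),
          sqrtCoeffC k • (-(Complex.I • (dagger c ψ * ψ))) ^ k →
    ∀ B, B = ∑ k ∈ Finset.range (p * q + 1),
          sqrtCoeffC k • (-(Complex.I • (ψ * dagger c ψ))) ^ k →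
    ∀ xΛ, xΛ = x.map (algebraMap ℂ Λ) →
    ∀ yΛ, yΛ = y.map (algebraMap ℂ Λ) →
      (dagger c (xΛ * A) * (xΛ * A) + Complex.I • (dagger c ψ * ψ) = 1)
      ∧ (-(dagger c (xΛ * A) * (Complex.I • (xΛ * dagger c ψ * yΛ)))
          + Complex.I • (dagger c ψ * (B * yΛ)) = 0)
      ∧ (-(dagger c (Complex.I • (xΛ * dagger c ψ * yΛ))
            * (Complex.I • (xΛ * dagger c ψ * yΛ)))
          + Complex.I • (dagger c (B * yΛ) * (B * yΛ))
        = Complex.I • (1 : Matrix (Fin q) (Fin q) Λ)) := by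
  intro ψ hψ A hA B hB xΛ hxΛ yΛ hyΛ
  -- the anticommuting generators
  set g : (Fin q × Fin p) ⊕ (Fin q × Fin p) → Λ :=
    Sum.elim (fun ab => ψ1 ab.1 ab.2) (fun ab => ψ2 ab.1 ab.2) with hg_def
  have hmemg : ∀ i, g i ∈
      Set.range (fun ab : Fin q × Fin p => ψ1 ab.1 ab.2) ∪
      Set.range (fun ab : Fin q × Fin p => ψ2 ab.1 ab.2) := by
    rintro (ab | ab)
    · exact Or.inl ⟨ab, rfl⟩
    · exact Or.inr ⟨ab, rfl⟩
  have hg : ∀ i j, g i * g j = -(g j * g i) := fun i j => hodd _ _ (hmemg i) (hmemg j)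
  set O : Submodule ℂ Λ := Submodule.span ℂ (Set.range g) with hO_def
  have hψO : ∀ a b, ψ a b ∈ O := by
    intro a b
    rw [hψ, Matrix.add_apply, Matrix.smul_apply]
    exact Submodule.add_mem _
      (Submodule.subset_span ⟨Sum.inl (a, b), rfl⟩)
      (Submodule.smul_mem _ _ (Submodule.subset_span ⟨Sum.inr (a, b), rfl⟩))
  have hcψ : ∀ a b, c (ψ a b) = ψ1 a b + (starRingEnd ℂ Complex.I) • ψ2 a b := by
    intro a b
    rw [hψ, Matrix.add_apply, Matrix.smul_apply, map_add, c_smul' c hc_alg, hreal1, hreal2]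
  have hcψO : ∀ a b, c (ψ a b) ∈ O := by
    intro a b
    rw [hcψ]
    exact Submodule.add_mem _
      (Submodule.subset_span ⟨Sum.inl (a, b), rfl⟩)
      (Submodule.smul_mem _ _ (Submodule.subset_span ⟨Sum.inr (a, b), rfl⟩))
  -- the even matrices
  set ψd := dagger c ψ with hψd_def
  set M : Matrix (Fin p) (Fin p) Λ := ψd * ψ with hM_def
  set N : Matrix (Fin q) (Fin q) Λ := ψ * ψd with hN_def
  set D : Matrix (Fin p) (Fin p) Λ := -(Complex.I • M) with hD_def
  set E : Matrix (Fin q) (Fin q) Λ := -(Complex.I • N) with hE_def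
  have hMapp : ∀ i j, M i j = ∑ k, c (ψ k i) * ψ k j := by
    intro i j
    rw [hM_def, Matrix.mul_apply]
    exact Finset.sum_congr rfl fun k _ => by rw [hψd_def, dagger_apply']
  have hNapp : ∀ i j, N i j = ∑ k, ψ i k * c (ψ j k) := by
    intro i j
    rw [hN_def, Matrix.mul_apply]
    exact Finset.sum_congr rfl fun k _ => by rw [hψd_def, dagger_apply']
  -- M and N are anti-self-adjoint
  have hMdag : dagger c M = -M := by
    ext i j
    rw [dagger_apply', Matrix.neg_apply, hMapp, hMapp, map_sum, ← Finset.sum_neg_distrib]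
    apply Finset.sum_congr rfl
    intro k _
    rw [_root_.map_mul, hc_inv]
    exact span_anticomm' g hg (hψO k j) (hcψO k i)
  have hNdag : dagger c N = -N := by
    ext i j
    rw [dagger_apply', Matrix.neg_apply, hNapp, hNapp, map_sum, ← Finset.sum_neg_distrib]
    apply Finset.sum_congr rfl
    intro k _
    rw [_root_.map_mul, hc_inv]
    exact span_anticomm' g hg (hcψO j k) (hψO i k)
  have hDdag : dagger c D = D := by
    rw [hD_def, dagger_neg', dagger_smul' c hc_alg, hMdag, Complex.conj_I]
    simp
  have hEdag : dagger c E = E := by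
    rw [hE_def, dagger_neg', dagger_smul' c hc_alg, hNdag, Complex.conj_I]
    simp
  -- entries of M and N pairwise commute
  have hMcomm : ∀ (a b a' b' : Fin p), Commute (M a b) (M a' b') := by
    intro a b a' b'
    rw [hMapp, hMapp]
    apply Commute.sum_left
    intro k _
    apply Commute.sum_right
    intro k' _
    exact even_comm' g hg (hcψO k a) (hψO k b) (hcψO k' a') (hψO k' b')
  have hNcomm : ∀ (a b a' b' : Fin q), Commute (N a b) (N a' b') := by
    intro a b a' b'
    rw [hNapp, hNapp]
    apply Commute.sum_left
    intro k _
    apply Commute.sum_right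
    intro k' _
    exact even_comm' g hg (hψO a k) (hcψO b k) (hψO a' k') (hcψO b' k')
  have hDcomm : ∀ (a b a' b' : Fin p), Commute (D a b) (D a' b') := by
    intro a b a' b'
    rw [hD_def]
    simp only [Matrix.neg_apply, Matrix.smul_apply]
    exact (((hMcomm a b a' b').smul_left Complex.I).smul_right Complex.I).neg_left.neg_right
  have hEcomm : ∀ (a b a' b' : Fin q), Commute (E a b) (E a' b') := by
    intro a b a' b'
    rw [hE_def]
    simp only [Matrix.neg_apply, Matrix.smul_apply]
    exact (((hNcomm a b a' b').smul_left Complex.I).smul_right Complex.I).neg_left.neg_right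
  -- nilpotency
  have hcard : Fintype.card ((Fin q × Fin p) ⊕ (Fin q × Fin p)) < 2*(p*q+1) := by
    rw [Fintype.card_sum, Fintype.card_prod, Fintype.card_fin, Fintype.card_fin, Nat.mul_comm q p]
    omega
  have hDT : ∀ i j, D i j ∈ Tpow g 2 := by
    intro i j
    rw [hD_def]
    simp only [Matrix.neg_apply, Matrix.smul_apply]
    apply Submodule.neg_mem
    apply Submodule.smul_mem
    rw [hMapp]
    apply Submodule.sum_mem
    intro k _
    exact Tpow_mul' g (span_le_Tpow_one' g (hcψO k i)) (span_le_Tpow_one' g (hψO k j)) rfl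
  have hET : ∀ i j, E i j ∈ Tpow g 2 := by
    intro i j
    rw [hE_def]
    simp only [Matrix.neg_apply, Matrix.smul_apply]
    apply Submodule.neg_mem
    apply Submodule.smul_mem
    rw [hNapp]
    apply Submodule.sum_mem
    intro k _
    exact Tpow_mul' g (span_le_Tpow_one' g (hψO i k)) (span_le_Tpow_one' g (hcψO j k)) rfl
  have hD0 : D^(p*q+1) = 0 := pow_eq_zero_of_entries g hg hcard D hDT
  have hE0 : E^(p*q+1) = 0 := pow_eq_zero_of_entries g hg hcard E hET
  -- A and B as truncated square roots
  have hAD : A = ∑ k ∈ Finset.range (p*q+1), sqrtCoeffC k • D^k := by rw [hA]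
  have hBE : B = ∑ k ∈ Finset.range (p*q+1), sqrtCoeffC k • E^k := by rw [hB]
  have hAA : A * A = 1 + D := by rw [hAD]; exact sqrt_mul_self D hD0
  have hBB : B * B = 1 + E := by rw [hBE]; exact sqrt_mul_self E hE0
  have hAdag : dagger c A = A := by
    rw [hAD, dagger_sum']
    apply Finset.sum_congr rfl
    intro k _
    rw [dagger_smul' c hc_alg, conj_sqrtCoeffC, dagger_pow' c hc_inv D hDdag hDcomm]
  have hBdag : dagger c B = B := by
    rw [hBE, dagger_sum']
    apply Finset.sum_congr rfl
    intro k _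
    rw [dagger_smul' c hc_alg, conj_sqrtCoeffC, dagger_pow' c hc_inv E hEdag hEcomm]
  -- unitarity transfer
  set xd : Matrix (Fin p) (Fin p) Λ := xᴴ.map (algebraMap ℂ Λ) with hxd_def
  set yd : Matrix (Fin q) (Fin q) Λ := yᴴ.map (algebraMap ℂ Λ) with hyd_def
  have hxdagger : dagger c xΛ = xd := by rw [hxΛ, dagger_map_alg' c hc_alg]
  have hydagger : dagger c yΛ = yd := by rw [hyΛ, dagger_map_alg' c hc_alg]
  have hxdx : xd * xΛ = 1 := by
    rw [hxd_def, hxΛ, ← Matrix.map_mul, hx, Matrix.map_one _ (map_zero _) (map_one _)]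
  have hydy : yd * yΛ = 1 := by
    rw [hyd_def, hyΛ, ← Matrix.map_mul, hy, Matrix.map_one _ (map_zero _) (map_one _)]
  have hcommx : ∀ (w : Λ) i j, Commute (c ((x.map (algebraMap ℂ Λ)) i j)) w :=
    fun w i j => (commute_c_alg' c hc_alg x i j w).symm
  have hxAdag : dagger c (xΛ * A) = A * xd := by
    rw [hxΛ]
    rw [dagger_mul' c _ A (fun i j k l => hcommx _ i j), hAdag, dagger_map_alg' c hc_alg]
  have hIneg : (-Complex.I) * Complex.I = 1 := by
    rw [neg_mul, Complex.I_mul_I, neg_neg]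
  refine ⟨?_, ?_, ?_⟩
  · -- relation 1
    rw [hxAdag]
    have hcore : (A * xd) * (xΛ * A) = A * A := by
      rw [Matrix.mul_assoc, ← Matrix.mul_assoc xd xΛ A, hxdx, Matrix.one_mul]
    rw [hcore, hAA, hD_def]
    abel
  · -- relation 2
    have hDψd : D * ψd = ψd * E := by
      rw [hD_def, hE_def, Matrix.neg_mul, Matrix.smul_mul, Matrix.mul_neg, Matrix.mul_smul,
        hM_def, hN_def, Matrix.mul_assoc]
    have hDkψd : ∀ k, D^k * ψd = ψd * E^k := by
      intro k
      induction k with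
      | zero => rw [pow_zero, pow_zero, Matrix.one_mul, Matrix.mul_one]
      | succ k ih =>
        rw [pow_succ, pow_succ, Matrix.mul_assoc, hDψd, ← Matrix.mul_assoc, ih,
          Matrix.mul_assoc]
    have hAψd : A * ψd = ψd * B := by
      rw [hAD, hBE, Matrix.sum_mul, Matrix.mul_sum]
      apply Finset.sum_congr rfl
      intro k _
      rw [Matrix.smul_mul, hDkψd, Matrix.mul_smul]
    rw [hxAdag]
    have h2a : (A * xd) * (Complex.I • (xΛ * ψd * yΛ)) = Complex.I • (ψd * (B * yΛ)) := by
      rw [Matrix.mul_smul]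
      congr 1
      have hxdm : xd * (xΛ * ψd * yΛ) = ψd * yΛ := by
        rw [← Matrix.mul_assoc, ← Matrix.mul_assoc, hxdx, Matrix.one_mul]
      rw [Matrix.mul_assoc, hxdm, ← Matrix.mul_assoc, hAψd, Matrix.mul_assoc]
    rw [h2a]
    exact neg_add_cancel _
  · -- relation 3
    have hWdag : dagger c (xΛ * ψd * yΛ) = yd * (ψ * xd) := by
      rw [hyΛ]
      rw [dagger_mul' c (xΛ * ψd) _ (fun i j k l => commute_c_alg' c hc_alg y k l _)]
      rw [dagger_map_alg' c hc_alg, hxΛ]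
      rw [dagger_mul' c _ ψd (fun i j k l => hcommx _ i j)]
      rw [hψd_def, dagger_dagger' c hc_inv, dagger_map_alg' c hc_alg]
    have h3a : dagger c (Complex.I • (xΛ * ψd * yΛ)) * (Complex.I • (xΛ * ψd * yΛ))
        = yd * (N * yΛ) := by
      rw [dagger_smul' c hc_alg, hWdag, Complex.conj_I, Matrix.smul_mul, Matrix.mul_smul,
        smul_smul, hIneg, one_smul]
      have hxdm : xd * (xΛ * ψd * yΛ) = ψd * yΛ := by
        rw [← Matrix.mul_assoc, ← Matrix.mul_assoc, hxdx, Matrix.one_mul]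
      rw [Matrix.mul_assoc, Matrix.mul_assoc, hxdm, ← Matrix.mul_assoc ψ ψd yΛ, ← hN_def]
    have hByd : dagger c (B * yΛ) = yd * B := by
      rw [hyΛ]
      rw [dagger_mul' c B _ (fun i j k l => commute_c_alg' c hc_alg y k l _), hBdag,
        dagger_map_alg' c hc_alg]
    have h3b : dagger c (B * yΛ) * (B * yΛ) = 1 + yd * (E * yΛ) := by
      rw [hByd, Matrix.mul_assoc, ← Matrix.mul_assoc B B yΛ, hBB, Matrix.add_mul,
        Matrix.one_mul, Matrix.mul_add, ← Matrix.mul_assoc yd, hydy]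
    rw [h3a, h3b, smul_add]
    have h3c : Complex.I • (yd * (E * yΛ)) = yd * (N * yΛ) := by
      rw [hE_def, Matrix.neg_mul, Matrix.smul_mul, Matrix.mul_neg, Matrix.mul_smul,
        smul_neg, smul_smul, Complex.I_mul_I, neg_smul, one_smul, neg_neg]
    rw [h3c]
    abel
end
end

section
/- Let I be an invariant integral on the Hopf superalgebra of regular functions on OSp(m|2n) given by I(f) = ∫_{O(m)×Sp(2n)₀} ∫_{B_{2mn}} det(A)^{-1} f (Theorem InvInt). Then I is non-degenerate: if f ∈ C^∞(O(m)×Sp(2n))₀ ⊗ Λ_{2mn} satisfies I(fg) = 0 for all g in the same algebra, then f = 0. The proof reduces to: writing f = Σ_A f_A θ_A over the monomial basis θ_A of Λ_{2mn}, choosing A with f_A ≠ 0 of lowest degree and θ_B complementary with ∫_B θ_Aθ_B ≠ 0, the choice g = det(A) h θ_B forces ∫ f_A h = 0 for all h, contradicting non-degeneracy of the Haar integral on the group. -/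
noncomputable section

section Aux

variable {N : ℕ} {T : Type*} [Ring T]

/-- Product of the generators along a list. -/
def thetaProd (θ : Fin N → T) (l : List (Fin N)) : T := (l.map θ).prod

lemma thetaProd_nil (θ : Fin N → T) : thetaProd θ [] = 1 := rfl

lemma thetaProd_cons (θ : Fin N → T) (i : Fin N) (l : List (Fin N)) :
    thetaProd θ (i :: l) = θ i * thetaProd θ l := by
  simp [thetaProd]

lemma thetaProd_append (θ : Fin N → T) (l l' : List (Fin N)) :
    thetaProd θ (l ++ l') = thetaProd θ l * thetaProd θ l' := by
  simp [thetaProd]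

lemma theta_mul_thetaProd_of_mem (θ : Fin N → T)
    (hanti : ∀ i j, θ i * θ j = -(θ j * θ i))
    (hsq : ∀ i, θ i * θ i = 0)
    (i : Fin N) (l : List (Fin N)) (hi : i ∈ l) :
    θ i * thetaProd θ l = 0 := by
  induction l with
  | nil => simp at hi
  | cons a t ih =>
    rw [thetaProd_cons]
    rcases List.mem_cons.mp hi with h | h
    · subst h
      rw [← mul_assoc, hsq, zero_mul]
    · rw [← mul_assoc, hanti i a, neg_mul, mul_assoc, ih h, mul_zero, neg_zero]

lemma thetaProd_eq_zero_of_not_nodup (θ : Fin N → T)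
    (hanti : ∀ i j, θ i * θ j = -(θ j * θ i))
    (hsq : ∀ i, θ i * θ i = 0)
    (l : List (Fin N)) (h : ¬ l.Nodup) :
    thetaProd θ l = 0 := by
  induction l with
  | nil => simp at h
  | cons a t ih =>
    rw [thetaProd_cons]
    rw [List.nodup_cons] at h
    push_neg at h
    by_cases ha : a ∈ t
    · exact theta_mul_thetaProd_of_mem θ hanti hsq a t ha
    · rw [ih (h ha), mul_zero]

lemma thetaProd_perm (θ : Fin N → T)
    (hanti : ∀ i j, θ i * θ j = -(θ j * θ i))
    {l l' : List (Fin N)} (h : l.Perm l') :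
    thetaProd θ l = thetaProd θ l' ∨ thetaProd θ l = -thetaProd θ l' := by
  induction h with
  | nil => exact Or.inl rfl
  | cons x _ ih =>
    rcases ih with h | h
    · exact Or.inl (by rw [thetaProd_cons, thetaProd_cons, h])
    · exact Or.inr (by rw [thetaProd_cons, thetaProd_cons, h, mul_neg])
  | swap x y l =>
    refine Or.inr ?_
    rw [thetaProd_cons, thetaProd_cons, thetaProd_cons, thetaProd_cons,
      ← mul_assoc, ← mul_assoc, hanti y x, neg_mul]
  | trans _ _ ih₁ ih₂ =>
    rcases ih₁ with h₁ | h₁ <;> rcases ih₂ with h₂ | h₂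
    · exact Or.inl (h₁.trans h₂)
    · exact Or.inr (h₁.trans h₂)
    · exact Or.inr (by rw [h₁, h₂])
    · exact Or.inl (by rw [h₁, h₂, neg_neg])

end Aux

/-- non-degeneracy of the invariant integral on `OSp(m|2n)`
(abstract formulation).  Let `R` be a commutative algebra (the regular
functions on `O(m) × Sp(2n)`) with a non-degenerate linear functional `μ`
(Haar integration), and let `T = R ⊗ Λ_N` be the algebra of superfunctions:
`T` is generated over `R` by odd anticommuting generators `θ i`, and is free
as an `R`-module with basis the ordered monomials `θ_A` indexed by
`A : Finset (Fin N)`, the Berezin integral being the `θ_{univ}`-coefficient.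
If `u ∈ T` (the density `det(A)⁻¹`) has invertible body, then the pairing
`(f, g) ↦ (μ ⊗ β)(u f g)` is non-degenerate: any `f` pairing to zero with all
`g` vanishes. -/
theorem invariant_integral_nondegenerate (N : ℕ)
    (R T : Type*) [CommRing R] [Algebra ℝ R] [Ring T] [Algebra R T]
    (θ : Fin N → T)
    (hanti : ∀ i j, θ i * θ j = -(θ j * θ i))
    (hsq : ∀ i, θ i * θ i = 0)
    (b : Module.Basis (Finset (Fin N)) R T)
    (hb : ∀ A : Finset (Fin N), b A = ((A.sort (· ≤ ·)).map θ).prod)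
    (μ : R →ₗ[ℝ] ℝ)
    (hμ : ∀ r : R, r ≠ 0 → ∃ s : R, μ (r * s) ≠ 0)
    (u : T) (hu : IsUnit (b.repr u ∅)) :
    ∀ f : T, (∀ g : T, μ (b.repr (u * f * g) Finset.univ) = 0) → f = 0 := by
  -- basic facts about the basis
  have hb' : ∀ A : Finset (Fin N), b A = thetaProd θ (A.sort (· ≤ ·)) := by
    intro A; rw [hb A]; rfl
  have hbone : (b ∅ : T) = 1 := by
    rw [hb' ∅, Finset.sort_empty, thetaProd_nil]
  -- product of basis elements, disjoint case
  have hmul_disj : ∀ A B : Finset (Fin N), Disjoint A B →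
      ∃ ε : R, (ε = 1 ∨ ε = -1) ∧ (b A : T) * b B = ε • b (A ∪ B) := by
    intro A B hAB
    have hperm : ((A.sort (· ≤ ·)) ++ (B.sort (· ≤ ·))).Perm ((A ∪ B).sort (· ≤ ·)) := by
      rw [← Multiset.coe_eq_coe, ← Multiset.coe_add, Finset.sort_eq, Finset.sort_eq,
        Finset.sort_eq, ← Finset.disjUnion_eq_union A B hAB]
      rfl
    have := thetaProd_perm θ hanti hperm
    rcases this with h | h
    · refine ⟨1, Or.inl rfl, ?_⟩
      rw [hb' A, hb' B, hb' (A ∪ B), ← thetaProd_append, h, one_smul]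
    · refine ⟨-1, Or.inr rfl, ?_⟩
      rw [hb' A, hb' B, hb' (A ∪ B), ← thetaProd_append, h, neg_smul, one_smul]
  -- product of basis elements, non-disjoint case
  have hmul_ndisj : ∀ A B : Finset (Fin N), ¬ Disjoint A B → (b A : T) * b B = 0 := by
    intro A B hAB
    rw [hb' A, hb' B, ← thetaProd_append]
    apply thetaProd_eq_zero_of_not_nodup θ hanti hsq
    rw [Finset.disjoint_left] at hAB
    push_neg at hAB
    obtain ⟨i, hiA, hiB⟩ := hAB
    intro hnd
    rw [List.nodup_append] at hnd
    exact hnd.2.2 i ((Finset.mem_sort _).mpr hiA) i ((Finset.mem_sort _).mpr hiB) rfl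
  -- now the main argument
  intro f H
  by_contra hf
  have hfr : b.repr f ≠ 0 := fun h => hf (b.repr.map_eq_zero_iff.mp h)
  have hsupp : (b.repr f).support.Nonempty := by
    rwa [Finsupp.support_nonempty_iff]
  obtain ⟨A, hA, hAmin⟩ := (b.repr f).support.exists_min_image Finset.card hsupp
  have hfA : b.repr f A ≠ 0 := Finsupp.mem_support_iff.mp hA
  set B : Finset (Fin N) := Aᶜ with hBdef
  -- step 1 : f * b B = (f_A * ε) • b univ
  obtain ⟨ε, hε, hAB⟩ := hmul_disj A B (disjoint_compl_right)
  have hAunionB : A ∪ B = Finset.univ := Finset.union_compl A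
  have hstep1 : f * b B = (b.repr f A * ε) • b Finset.univ := by
    have hexp : f = ∑ D : Finset (Fin N), b.repr f D • b D := (b.sum_repr f).symm
    nth_rewrite 1 [hexp]
    rw [Finset.sum_mul, Finset.sum_eq_single A]
    · rw [smul_mul_assoc, hAB, hAunionB, smul_smul]
    · intro D _ hDA
      by_cases hD : D ∈ (b.repr f).support
      · have hle : A.card ≤ D.card := hAmin D hD
        have hnd : ¬ Disjoint D B := by
          intro hd
          have hDsubA : D ⊆ A := by
            intro i hi
            by_contra hiA
            exact (Finset.disjoint_left.mp hd) hi (Finset.mem_compl.mpr hiA)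
          exact hDA (Finset.eq_of_subset_of_card_le hDsubA hle)
        rw [smul_mul_assoc, hmul_ndisj D B hnd, smul_zero]
      · rw [Finsupp.notMem_support_iff.mp hD, zero_smul, zero_mul]
    · intro hA'
      exact absurd (Finset.mem_univ A) hA'
  -- step 2 : u * (f * b B) = (u_∅ * f_A * ε) • b univ
  have humul : ∀ C : Finset (Fin N), (b C : T) * b Finset.univ =
      if C = ∅ then b Finset.univ else 0 := by
    intro C
    by_cases hC : C = ∅
    · simp [hC, hbone]
    · rw [if_neg hC]
      apply hmul_ndisj
      intro hd
      apply hC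
      rw [Finset.eq_empty_iff_forall_notMem]
      intro i hi
      exact (Finset.disjoint_left.mp hd) hi (Finset.mem_univ i)
  have hstep2 : u * b Finset.univ = (b.repr u ∅) • b Finset.univ := by
    have hexp : u = ∑ C : Finset (Fin N), b.repr u C • b C := (b.sum_repr u).symm
    nth_rewrite 1 [hexp]
    rw [Finset.sum_mul, Finset.sum_eq_single (∅ : Finset (Fin N))]
    · rw [smul_mul_assoc, humul ∅, if_pos rfl]
    · intro C _ hC
      rw [smul_mul_assoc, humul C, if_neg hC, smul_zero]
    · intro h
      exact absurd (Finset.mem_univ (∅ : Finset (Fin N))) h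
  -- combine
  have key : ∀ s : R, b.repr (u * f * ((ε * s) • b B)) Finset.univ
      = b.repr u ∅ * b.repr f A * s := by
    intro s
    have : u * f * ((ε * s) • b B) = (ε * s) • (u * (f * b B)) := by
      rw [mul_assoc, mul_smul_comm, mul_smul_comm]
    rw [this, hstep1, mul_smul_comm, hstep2, map_smul, map_smul, map_smul,
      Module.Basis.repr_self, smul_smul, smul_smul]
    rw [Finsupp.smul_apply, Finsupp.single_eq_same, smul_eq_mul, mul_one]
    rcases hε with h | h <;> subst h <;> ring
  -- contradiction with non-degeneracy of μ
  have hne : b.repr u ∅ * b.repr f A ≠ 0 := by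
    intro h
    obtain ⟨v, hv⟩ := hu
    apply hfA
    have := congrArg (fun x => (↑v⁻¹ : R) * x) h
    simp only [mul_zero] at this
    rw [← mul_assoc, ← hv] at this
    simpa using this
  obtain ⟨s, hs⟩ := hμ _ hne
  exact hs (by rw [← key s]; exact H _)
end
end
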